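/- Let (R, m) be a Noetherian local ring which is not Cohen-Macaulay and y_1,…,y_d a system of parameters. Then the limit closure (y)^{lim} = ∪_{t≥1} ((y_1^t,…,y_d^t) :_R (y_1⋯y_d)^{t-1}) strictly contains the ideal (y_1,…,y_d); in particular there exists u ∉ (y_1,…,y_d) and t with u·(y_1⋯y_d)^{t-1} ∈ (y_1^t,…,y_d^t). -/

import Mathlib

open IsLocalRing Pointwise

section Aux

variable {R : Type*} [CommRing R]

private lemma prod_split {d : ℕ} (y : Fin d → R) (j : Fin d) (b : Fin d → ℕ) :
    (∏ i, y i ^ b i) = y j ^ b j * ∏ i ∈ Finset.univ.erase j, y i ^ b i :=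
  (Finset.mul_prod_erase Finset.univ _ (Finset.mem_univ j)).symm

/-- The key "grid" lemma: from the diagonal colon hypothesis `H`, deduce all the
monomial colon identities `(y₁^t,…,y_d^t) : y^a ⊆ (y₁^{t-a₁},…,y_d^{t-a_d})`. -/
private lemma grid {d : ℕ} (y : Fin d → R)
    (H : ∀ (t : ℕ) (u : R), u * (∏ i, y i) ^ t ∈ Ideal.span (Set.range fun i => y i ^ (t + 1)) →
      u ∈ Ideal.span (Set.range y)) :
    ∀ (n t : ℕ) (a : Fin d → ℕ), (∀ i, a i + 1 ≤ t) → (∑ i, (t - 1 - a i)) = n →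
      ∀ u : R, u * ∏ i, y i ^ a i ∈ Ideal.span (Set.range fun i => y i ^ t) →
        u ∈ Ideal.span (Set.range fun i => y i ^ (t - a i)) := by
  intro n
  induction n using Nat.strong_induction_on with
  | _ n IH =>
    intro t a ha hsum u hu
    by_cases hex : ∃ i, a i + 1 < t
    · obtain ⟨i0, hi0⟩ := hex
      set a1 : Fin d → ℕ := Function.update a i0 (a i0 + 1) with ha1def
      set a2 : Fin d → ℕ := Function.update a i0 (t - 1) with ha2def
      have ha1i0 : a1 i0 = a i0 + 1 := Function.update_self _ _ _
      have ha2i0 : a2 i0 = t - 1 := Function.update_self _ _ _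
      have ha1ne : ∀ i, i ≠ i0 → a1 i = a i := fun i hi => Function.update_of_ne hi _ _
      have ha2ne : ∀ i, i ≠ i0 → a2 i = a i := fun i hi => Function.update_of_ne hi _ _
      have erase_eq : ∀ b : Fin d → ℕ, (∀ i, i ≠ i0 → b i = a i) →
          (∏ i ∈ Finset.univ.erase i0, y i ^ b i) = ∏ i ∈ Finset.univ.erase i0, y i ^ a i :=
        fun b hb => Finset.prod_congr rfl fun i hi => by
          rw [hb i (Finset.ne_of_mem_erase hi)]
      -- Step 1 : apply IH to a1 = a + e_{i0}
      have h1 : u * ∏ i, y i ^ a1 i ∈ Ideal.span (Set.range fun i => y i ^ t) := by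
        have hpe : (∏ i, y i ^ a1 i) = (∏ i, y i ^ a i) * y i0 := by
          rw [prod_split y i0 a1, prod_split y i0 a, erase_eq a1 ha1ne, ha1i0, pow_succ]
          ring
        rw [hpe, ← mul_assoc]
        exact Ideal.mul_mem_right _ _ hu
      have hs1 : ∑ i, (t - 1 - a1 i) < n := by
        subst hsum
        refine Finset.sum_lt_sum (fun i _ => ?_) ⟨i0, Finset.mem_univ i0, ?_⟩
        · by_cases h : i = i0
          · subst h; rw [ha1i0]; omega
          · rw [ha1ne i h]
        · rw [ha1i0]; omega
      have hu1 := IH _ hs1 t a1 (fun i => by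
          by_cases h : i = i0
          · subst h; rw [ha1i0]; omega
          · rw [ha1ne i h]; exact ha i) rfl u h1
      obtain ⟨c, hc⟩ := Ideal.mem_span_range_iff_exists_fun.mp hu1
      -- Step 2 : apply IH to a2 = a with (t-1) at i0
      have hu' : u = c i0 * y i0 ^ (t - a1 i0) +
          ∑ i ∈ Finset.univ.erase i0, c i * y i ^ (t - a1 i) := by
        rw [← hc]
        exact (Finset.add_sum_erase _ _ (Finset.mem_univ i0)).symm
      have e2 : (t - a1 i0) + a i0 = t - 1 := by rw [ha1i0]; omega
      have hSP : (∑ i ∈ Finset.univ.erase i0, c i * y i ^ (t - a1 i)) * ∏ k, y k ^ a k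
          ∈ Ideal.span (Set.range fun i => y i ^ t) := by
        rw [Finset.sum_mul]
        refine Ideal.sum_mem _ fun i hi => ?_
        have hne := Finset.ne_of_mem_erase hi
        have e1 : (t - a1 i) + a i = t := by rw [ha1ne i hne]; have := ha i; omega
        have hyp : y i ^ t = y i ^ (t - a1 i) * y i ^ a i := by rw [← pow_add, e1]
        have : c i * y i ^ (t - a1 i) * ∏ k, y k ^ a k
            = (c i * ∏ k ∈ Finset.univ.erase i, y k ^ a k) * y i ^ t := by
          rw [hyp, prod_split y i a]; ring
        rw [this]
        exact Ideal.mul_mem_left _ _ (Ideal.subset_span ⟨i, rfl⟩)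
      have heq : c i0 * ∏ i, y i ^ a2 i +
          (∑ i ∈ Finset.univ.erase i0, c i * y i ^ (t - a1 i)) * ∏ k, y k ^ a k
          = u * ∏ i, y i ^ a i := by
        have hyp0 : y i0 ^ (t - 1) = y i0 ^ (t - a1 i0) * y i0 ^ a i0 := by
          rw [← pow_add, e2]
        rw [prod_split y i0 a2, erase_eq a2 ha2ne, ha2i0, hyp0, prod_split y i0 a, hu']
        ring
      have h2 : c i0 * ∏ i, y i ^ a2 i ∈ Ideal.span (Set.range fun i => y i ^ t) := by
        rw [eq_sub_of_add_eq heq]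
        exact Ideal.sub_mem _ hu hSP
      have hs2 : ∑ i, (t - 1 - a2 i) < n := by
        subst hsum
        refine Finset.sum_lt_sum (fun i _ => ?_) ⟨i0, Finset.mem_univ i0, ?_⟩
        · by_cases h : i = i0
          · subst h; rw [ha2i0]; omega
          · rw [ha2ne i h]
        · rw [ha2i0]; omega
      have hu2 := IH _ hs2 t a2 (fun i => by
          by_cases h : i = i0
          · subst h; rw [ha2i0]; omega
          · rw [ha2ne i h]; exact ha i) rfl _ h2
      obtain ⟨b, hb⟩ := Ideal.mem_span_range_iff_exists_fun.mp hu2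
      -- Step 3 : conclude
      rw [hu']
      refine Ideal.add_mem _ ?_ (Ideal.sum_mem _ fun i hi => ?_)
      · rw [← hb, Finset.sum_mul]
        refine Ideal.sum_mem _ fun i _ => ?_
        by_cases h : i = i0
        · subst h
          have e3 : (t - a2 i) + (t - a1 i) = t - a i := by rw [ha2i0, ha1i0]; omega
          have : b i * y i ^ (t - a2 i) * y i ^ (t - a1 i) = b i * y i ^ (t - a i) := by
            rw [mul_assoc, ← pow_add, e3]
          rw [this]
          exact Ideal.mul_mem_left _ _ (Ideal.subset_span ⟨i, rfl⟩)
        · have : b i * y i ^ (t - a2 i) * y i0 ^ (t - a1 i0)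
              = (b i * y i0 ^ (t - a1 i0)) * y i ^ (t - a i) := by
            rw [ha2ne i h]; ring
          rw [this]
          exact Ideal.mul_mem_left _ _ (Ideal.subset_span ⟨i, rfl⟩)
      · have hne := Finset.ne_of_mem_erase hi
        rw [ha1ne i hne]
        exact Ideal.mul_mem_left _ _ (Ideal.subset_span ⟨i, rfl⟩)
    · -- base case : a i = t - 1 for all i
      rcases isEmpty_or_nonempty (Fin d) with hd | hd
      · haveI := hd
        have h0 : ∀ f : Fin d → R, Set.range f = ∅ := fun f => Set.range_eq_empty f
        simp only [h0, Finset.univ_eq_empty, Finset.prod_empty, mul_one] at hu ⊢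
        exact hu
      · push_neg at hex
        obtain ⟨i⟩ := hd
        obtain ⟨s, rfl⟩ : ∃ s, t = s + 1 := ⟨t - 1, by have := ha i; omega⟩
        have hall : ∀ i, a i = s := fun i => by have h1 := ha i; have h2 := hex i; omega
        have hprod : (∏ i, y i ^ a i) = (∏ i, y i) ^ s := by
          rw [← Finset.prod_pow]
          exact Finset.prod_congr rfl fun i _ => by rw [hall i]
        have hfun : (fun i => y i ^ (s + 1 - a i)) = y := funext fun i => by
          rw [hall i]; simp
        rw [hfun]
        exact H s u (by rwa [hprod] at hu)

end Aux

universe u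

set_option maxHeartbeats 1000000 in
private lemma weaklyRegular_of_H :
    ∀ (d : ℕ) (R : Type u) [CommRing R] [IsNoetherianRing R] [IsLocalRing R]
      (y : Fin d → R), (∀ i, y i ∈ maximalIdeal R) →
      (∀ (t : ℕ) (u : R),
        u * (∏ i, y i) ^ t ∈ Ideal.span (Set.range fun i => y i ^ (t + 1)) →
        u ∈ Ideal.span (Set.range y)) →
      RingTheory.Sequence.IsWeaklyRegular R (List.ofFn y) := by
  intro d
  induction d with
  | zero =>
    intro R _ _ _ y _ _
    simp only [List.ofFn_zero]
    exact RingTheory.Sequence.IsWeaklyRegular.nil R R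
  | succ e IH =>
    intro R _ _ _ y hm H
    set x := y 0 with hxdef
    -- `x` is a nonzerodivisor
    have hker : ∀ w : R, w * x = 0 → w = 0 := by
      intro w hw
      have hmem : ∀ t : ℕ, w ∈ (maximalIdeal R) ^ (t + 1) := by
        intro t
        have ha : ∀ i : Fin (e+1), (if i = 0 then 1 else 0) + 1 ≤ t + 2 := by
          intro i; split <;> omega
        have hprod : (∏ i, y i ^ (if i = (0 : Fin (e+1)) then 1 else 0)) = x := by
          rw [Fin.prod_univ_succ]
          simp [Fin.succ_ne_zero, hxdef]
        have h0 : w * ∏ i, y i ^ (if i = (0 : Fin (e+1)) then 1 else 0)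
            ∈ Ideal.span (Set.range fun i : Fin (e+1) => y i ^ (t + 2)) := by
          rw [hprod, hw]; exact Ideal.zero_mem _
        have hgrid := grid y H
          (∑ i : Fin (e+1), (t + 2 - 1 - if i = (0 : Fin (e+1)) then 1 else 0)) (t+2)
          _ ha rfl w h0
        refine Ideal.span_le.mpr ?_ hgrid
        rintro _ ⟨i, rfl⟩
        have hk : t + 1 ≤ t + 2 - (if i = (0 : Fin (e+1)) then 1 else 0) := by
          split <;> omega
        exact Ideal.pow_le_pow_right hk (Ideal.pow_mem_pow (hm i) _)
      have hw0 : w ∈ ⨅ n : ℕ, (maximalIdeal R) ^ n := by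
        rw [Submodule.mem_iInf]
        intro n
        cases n with
        | zero => simp
        | succ t => exact hmem t
      rw [Ideal.iInf_pow_eq_bot_of_isLocalRing _
        (Ideal.IsMaximal.ne_top (maximalIdeal.isMaximal R))] at hw0
      exact hw0
    have hreg : IsSMulRegular R x := by
      intro u v huv
      have h1 : x * u = x * v := huv
      have h2 : (u - v) * x = 0 := by ring_nf; linear_combination h1
      exact sub_eq_zero.mp (hker _ h2)
    -- the quotient ring
    set I : Ideal R := Ideal.span {x} with hIdef
    have hIm : I ≤ maximalIdeal R := by
      rw [hIdef, Ideal.span_le, Set.singleton_subset_iff]; exact hm 0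
    have hInetop : I ≠ ⊤ := fun h =>
      (Ideal.IsMaximal.ne_top (maximalIdeal.isMaximal R)) (top_le_iff.mp (h ▸ hIm))
    haveI : Nontrivial (R ⧸ I) := Ideal.Quotient.nontrivial_iff.mpr hInetop
    haveI : IsLocalRing (R ⧸ I) :=
      IsLocalRing.of_surjective' (Ideal.Quotient.mk I) Ideal.Quotient.mk_surjective
    set y' : Fin e → R ⧸ I := fun i => Ideal.Quotient.mk I (y i.succ) with hy'def
    have hm' : ∀ i, y' i ∈ maximalIdeal (R ⧸ I) := by
      intro i
      rw [IsLocalRing.mem_maximalIdeal, mem_nonunits_iff]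
      intro hunit
      obtain ⟨b, hb⟩ := isUnit_iff_exists_inv.mp hunit
      obtain ⟨v, rfl⟩ := Ideal.Quotient.mk_surjective b
      have hb' : Ideal.Quotient.mk I (y i.succ * v) = Ideal.Quotient.mk I 1 := by
        rw [map_mul, map_one]; exact hb
      have hIv : y i.succ * v - 1 ∈ I := Ideal.Quotient.eq.mp hb'
      have h1 : (1 : R) ∈ maximalIdeal R := by
        have hyv : y i.succ * v ∈ maximalIdeal R := Ideal.mul_mem_right _ _ (hm i.succ)
        have := Ideal.sub_mem _ hyv (hIm hIv)
        simpa using this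
      exact (Ideal.IsMaximal.ne_top (maximalIdeal.isMaximal R))
        (Ideal.eq_top_of_isUnit_mem _ h1 isUnit_one)
    have H' : ∀ (t : ℕ) (u' : R ⧸ I),
        u' * (∏ i, y' i) ^ t ∈ Ideal.span (Set.range fun i => y' i ^ (t + 1)) →
        u' ∈ Ideal.span (Set.range y') := by
      intro t u' hu'
      obtain ⟨u, rfl⟩ := Ideal.Quotient.mk_surjective u'
      have hspan : Ideal.span (Set.range fun i => y' i ^ (t + 1)) =
          Ideal.map (Ideal.Quotient.mk I)
            (Ideal.span (Set.range fun i : Fin e => y i.succ ^ (t + 1))) := by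
        rw [Ideal.map_span]
        congr 1
        ext z
        constructor
        · rintro ⟨i, rfl⟩
          exact ⟨y i.succ ^ (t + 1), ⟨i, rfl⟩, by simp [hy'def]⟩
        · rintro ⟨w, ⟨i, rfl⟩, rfl⟩
          exact ⟨i, by simp [hy'def]⟩
      rw [hspan] at hu'
      have hprodq : (∏ i, y' i) = Ideal.Quotient.mk I (∏ i : Fin e, y i.succ) := by
        rw [hy'def, map_prod]
      rw [hprodq, ← map_pow, ← map_mul] at hu'
      obtain ⟨w, hwmem, hweq⟩ :=
        (Ideal.mem_map_iff_of_surjective _ Ideal.Quotient.mk_surjective).mp hu'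
      obtain ⟨r, hr⟩ := Ideal.mem_span_singleton'.mp (Ideal.Quotient.eq.mp hweq)
      have hx0 : (∏ i : Fin (e+1), y i) = x * ∏ i : Fin e, y i.succ := Fin.prod_univ_succ y
      have hmem : u * (∏ i : Fin (e+1), y i) ^ t
          ∈ Ideal.span (Set.range fun i : Fin (e+1) => y i ^ (t + 1)) := by
        have hsub : Ideal.span (Set.range fun i : Fin e => y i.succ ^ (t + 1)) ≤
            Ideal.span (Set.range fun i : Fin (e+1) => y i ^ (t + 1)) := by
          rw [Ideal.span_le]; rintro _ ⟨i, rfl⟩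
          exact Ideal.subset_span ⟨i.succ, rfl⟩
        have heq2 : u * (∏ i : Fin (e+1), y i) ^ t
            = x ^ t * w - (r * x ^ t) * x := by
          have huP : u * (∏ i : Fin e, y i.succ) ^ t = w - r * x := by
            linear_combination hr
          rw [hx0, mul_pow]
          calc u * (x ^ t * (∏ i : Fin e, y i.succ) ^ t)
              = x ^ t * (u * (∏ i : Fin e, y i.succ) ^ t) := by ring
            _ = x ^ t * (w - r * x) := by rw [huP]
            _ = x ^ t * w - (r * x ^ t) * x := by ring
        rw [heq2]
        refine Ideal.sub_mem _ (Ideal.mul_mem_left _ _ (hsub hwmem)) ?_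
        have hxx : (r * x ^ t) * x = r * x ^ (t + 1) := by rw [mul_assoc, ← pow_succ]
        rw [hxx]
        exact Ideal.mul_mem_left _ _ (Ideal.subset_span ⟨0, rfl⟩)
      have hu2 := H t u hmem
      obtain ⟨cc, hcc⟩ := Ideal.mem_span_range_iff_exists_fun.mp hu2
      apply Ideal.mem_span_range_iff_exists_fun.mpr
      refine ⟨fun i => Ideal.Quotient.mk I (cc i.succ), ?_⟩
      have hmk : Ideal.Quotient.mk I u
          = Ideal.Quotient.mk I (∑ i : Fin (e+1), cc i * y i) := by rw [hcc]
      rw [hmk, map_sum, Fin.sum_univ_succ]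
      have hx00 : Ideal.Quotient.mk I (cc 0 * y 0) = 0 := by
        rw [map_mul, Ideal.Quotient.eq_zero_iff_mem.mpr
          (Ideal.subset_span (Set.mem_singleton x)), mul_zero]
      rw [hx00, zero_add]
      exact (Finset.sum_congr rfl fun i _ => by rw [map_mul]).symm
    have hWR' := IH (R ⧸ I) y' hm' H'
    -- transfer back to `R`
    have hxt : (I : Submodule R R) = x • (⊤ : Submodule R R) := by
      rw [← Submodule.ideal_span_singleton_smul, smul_eq_mul, Ideal.mul_top, hIdef]
    rw [List.ofFn_succ]
    rw [RingTheory.Sequence.isWeaklyRegular_cons_iff']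
    refine ⟨hreg, ?_⟩
    rw [List.map_ofFn]
    let eAdd : (R ⧸ I) ≃+ QuotSMulTop x R :=
      (Submodule.quotEquivOfEq (I : Submodule R R) (x • ⊤) hxt).toAddEquiv
    have hfa : List.Forall₂ (fun (r s : R ⧸ I) => ∀ z, eAdd (r • z) = s • eAdd z)
        (List.ofFn y') (List.ofFn y') := by
      rw [List.forall₂_same]
      intro r _ z
      obtain ⟨a, rfl⟩ := Ideal.Quotient.mk_surjective r
      obtain ⟨b, rfl⟩ := Ideal.Quotient.mk_surjective z
      rfl
    exact (AddEquiv.isWeaklyRegular_congr hfa).mp hWR'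

/-- Let `(R, m)` be a Noetherian local ring of dimension `d` which is not Cohen–Macaulay
(equivalently, the system of parameters `y` is not a regular sequence), and `y_1, …, y_d` a
system of parameters.  Then the limit closure
`(y)^lim = ∪_t ((y_1^t, …, y_d^t) :_R (y_1⋯y_d)^{t-1})` strictly contains the ideal
`(y_1, …, y_d)`; in particular there exist `u ∉ (y_1, …, y_d)` and `t` with
`u·(y_1⋯y_d)^{t-1} ∈ (y_1^t, …, y_d^t)` (below the exponents are shifted by `t ↦ t + 1`). -/
theorem limitClosure_strict_of_not_CM {R : Type*} [CommRing R] [IsNoetherianRing R]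
    [IsLocalRing R] (d : ℕ) (hdim : ringKrullDim R = d) (y : Fin d → R)
    (hy₁ : Ideal.span (Set.range y) ≤ maximalIdeal R)
    (hy₂ : ∃ k : ℕ, maximalIdeal R ^ k ≤ Ideal.span (Set.range y))
    (hnotCM : ¬ RingTheory.Sequence.IsRegular R (List.ofFn y)) :
    (↑(Ideal.span (Set.range y)) : Set R) ⊂
        (⋃ t : ℕ, {r : R | r * (∏ i, y i) ^ t ∈
          Ideal.span (Set.range fun i => y i ^ (t + 1))}) ∧
      ∃ (u : R) (t : ℕ), u ∉ Ideal.span (Set.range y) ∧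
        u * (∏ i, y i) ^ t ∈ Ideal.span (Set.range fun i => y i ^ (t + 1)) := by
  have hmemy : ∀ i, y i ∈ maximalIdeal R := fun i => hy₁ (Ideal.subset_span ⟨i, rfl⟩)
  have hsub : (↑(Ideal.span (Set.range y)) : Set R) ⊆
      ⋃ t : ℕ, {r : R | r * (∏ i, y i) ^ t ∈
        Ideal.span (Set.range fun i => y i ^ (t + 1))} := by
    intro u hu
    refine Set.mem_iUnion.mpr ⟨0, ?_⟩
    simpa using hu
  have hnot : ¬ ((⋃ t : ℕ, {r : R | r * (∏ i, y i) ^ t ∈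
      Ideal.span (Set.range fun i => y i ^ (t + 1))})
      ⊆ (↑(Ideal.span (Set.range y)) : Set R)) := by
    intro hss
    apply hnotCM
    have H : ∀ (t : ℕ) (u : R),
        u * (∏ i, y i) ^ t ∈ Ideal.span (Set.range fun i => y i ^ (t + 1)) →
        u ∈ Ideal.span (Set.range y) := fun t u hu => hss (Set.mem_iUnion.mpr ⟨t, hu⟩)
    refine ⟨weaklyRegular_of_H d R y hmemy H, ?_⟩
    intro htop
    have h1 : (1 : R) ∈ Ideal.ofList (List.ofFn y) • (⊤ : Submodule R R) :=
      htop ▸ Submodule.mem_top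
    rw [smul_eq_mul, Ideal.mul_top] at h1
    have hof : Ideal.ofList (List.ofFn y) = Ideal.span (Set.range y) := by
      exact congrArg Ideal.span
        (Set.ext fun r => List.mem_ofFn.trans Set.mem_range.symm)
    rw [hof] at h1
    exact (Ideal.IsMaximal.ne_top (maximalIdeal.isMaximal R))
      (Ideal.eq_top_of_isUnit_mem _ (hy₁ h1) isUnit_one)
  refine ⟨ssubset_iff_subset_not_subset.mpr ⟨hsub, hnot⟩, ?_⟩
  obtain ⟨z, hzB, hzA⟩ := Set.not_subset.mp hnot
  obtain ⟨t, hzt⟩ := Set.mem_iUnion.mp hzB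
  exact ⟨z, t, hzA, hzt⟩
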